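/- Let β ∈ (1/2,1), q ∈ (1, 2β], c > 0, e₁ ∈ ℂ, K > 0, δ > 0, and set c_β = Γ(1−β) e^{iβπ/2}. Let λ : (0,δ] → ℂ satisfy |1 − λ(b) − c c_β b^{β} − e₁ b| ≤ K b^{q} for all b ∈ (0,δ]. Let J = ⌊(q−β)/(1−β)⌋, and define c_j = (−1)^j e₁^{j} / (c c_β)^{j+1} for 0 ≤ j ≤ J (so c₀ = (c c_β)^{−1}). Then there exist δ' ∈ (0,δ] and C > 0 such that λ(b) ≠ 1 for all b ∈ (0,δ'] and |(1 − λ(b))^{−1} − Σ_{j=0}^{J} c_j b^{−((j+1)β − j)}| ≤ C b^{−(2β−q)} for all b ∈ (0,δ']. -/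

import Mathlib

open Real

set_option maxHeartbeats 1000000

theorem stmt10 (β q c K δ : ℝ) (e₁ : ℂ)
    (hβ : β ∈ Set.Ioo (1/2 : ℝ) 1) (hq : q ∈ Set.Ioc 1 (2*β)) (hc : 0 < c)
    (hK : 0 < K) (hδ : 0 < δ)
    (cβ : ℂ) (hcβ : cβ = (Real.Gamma (1-β) : ℂ) * Complex.exp (Complex.I * (β:ℂ) * (π:ℂ) / 2))
    (lam : ℝ → ℂ)
    (hlam : ∀ b ∈ Set.Ioc (0:ℝ) δ,
      ‖1 - lam b - (c:ℂ) * cβ * ((b ^ β : ℝ) : ℂ) - e₁ * (b:ℂ)‖ ≤ K * b ^ q) :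
    ∃ δ' ∈ Set.Ioc (0:ℝ) δ, ∃ C : ℝ, 0 < C ∧ ∀ b ∈ Set.Ioc (0:ℝ) δ',
      lam b ≠ 1 ∧
      ‖(1 - lam b)⁻¹ - ∑ j ∈ Finset.range (⌊(q - β) / (1 - β)⌋₊ + 1),
          ((-1:ℂ)^j * e₁^j / ((c:ℂ) * cβ)^(j+1)) *
            ((b ^ (-(((j:ℝ) + 1) * β - (j:ℝ))) : ℝ) : ℂ)‖
        ≤ C * b ^ (-(2*β - q)) := by
  obtain ⟨hβ1, hβ2⟩ := hβ
  obtain ⟨hq1, hq2⟩ := hq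
  set J : ℕ := ⌊(q - β) / (1 - β)⌋₊ with hJdef
  have hΓ : 0 < Real.Gamma (1 - β) := Real.Gamma_pos_of_pos (by linarith)
  set a : ℝ := c * Real.Gamma (1 - β) with ha_def
  have ha : 0 < a := mul_pos hc hΓ
  have hcβn : ‖cβ‖ = Real.Gamma (1 - β) := by
    rw [hcβ]
    have harg : Complex.I * (β:ℂ) * (π:ℂ) / 2 = ((β * π / 2 : ℝ):ℂ) * Complex.I := by
      push_cast; ring
    rw [harg, norm_mul, Complex.norm_real, Real.norm_eq_abs, abs_of_pos hΓ,
      Complex.norm_exp_ofReal_mul_I, mul_one]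
  have hcβ0 : cβ ≠ 0 := by
    intro h; rw [h, norm_zero] at hcβn; linarith
  have hccβn : ‖(c:ℂ) * cβ‖ = a := by
    rw [norm_mul, Complex.norm_real, Real.norm_eq_abs, abs_of_pos hc, hcβn]
  have hccβ0 : (c:ℂ) * cβ ≠ 0 := by
    intro h; rw [h, norm_zero] at hccβn; linarith
  set M : ℝ := ‖e₁‖ + K with hM_def
  have hM : 0 < M := by positivity
  set ε : ℝ := (a / (2 * M)) ^ ((1 - β)⁻¹ : ℝ) with hε_def
  have hε : 0 < ε := Real.rpow_pos_of_pos (by positivity) _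
  set δ' : ℝ := min δ (min 1 ε) with hδ'_def
  have hδ'0 : 0 < δ' := lt_min hδ (lt_min one_pos hε)
  refine ⟨δ', ⟨hδ'0, min_le_left _ _⟩, 4 * K / a ^ 2 + (2 / a) * (M / a) ^ (J + 1), by positivity, ?_⟩
  intro b ⟨hb, hbδ'⟩
  have hbδ : b ≤ δ := hbδ'.trans (min_le_left _ _)
  have hb1 : b ≤ 1 := hbδ'.trans ((min_le_right _ _).trans (min_le_left _ _))
  have hbε : b ≤ ε := hbδ'.trans ((min_le_right _ _).trans (min_le_right _ _))
  have hbβ : 0 < b ^ β := Real.rpow_pos_of_pos hb β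
  have h1β : b ^ (1 - β) ≤ a / (2 * M) := by
    calc b ^ (1 - β) ≤ ε ^ (1 - β) := Real.rpow_le_rpow hb.le hbε (by linarith)
      _ = a / (2 * M) := Real.rpow_inv_rpow (by positivity) (by linarith)
  -- basic quantities
  set A : ℂ := (c:ℂ) * cβ * ((b ^ β : ℝ) : ℂ) with hA_def
  have hAn : ‖A‖ = a * b ^ β := by
    rw [hA_def, norm_mul, hccβn, Complex.norm_real, Real.norm_eq_abs, abs_of_pos hbβ]
  have hA0 : A ≠ 0 := by
    intro h; rw [h, norm_zero] at hAn; exact absurd hAn.symm (by positivity)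
  set w : ℂ := 1 - lam b - A - e₁ * (b:ℂ) with hw_def
  have hw : ‖w‖ ≤ K * b ^ q := hlam b ⟨hb, hbδ⟩
  have hbq : b ^ q ≤ b := by
    calc b ^ q ≤ b ^ (1:ℝ) := Real.rpow_le_rpow_of_exponent_ge hb hb1 hq1.le
      _ = b := Real.rpow_one b
  have hsplit : b ^ (1 - β) * b ^ β = b := by
    rw [← Real.rpow_add hb]; simp
  have hMb : M * b ≤ a / 2 * b ^ β := by
    calc M * b = (M * b ^ (1 - β)) * b ^ β := by rw [mul_assoc, hsplit]
      _ ≤ (M * (a / (2 * M))) * b ^ β := by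
          have : M * b ^ (1 - β) ≤ M * (a / (2 * M)) :=
            mul_le_mul_of_nonneg_left h1β hM.le
          exact mul_le_mul_of_nonneg_right this hbβ.le
      _ = a / 2 * b ^ β := by field_simp
  have he₁b : ‖e₁ * (b:ℂ)‖ ≤ M * b := by
    rw [norm_mul, Complex.norm_real, Real.norm_eq_abs, abs_of_pos hb]
    have : ‖e₁‖ ≤ M := by rw [hM_def]; linarith
    exact mul_le_mul_of_nonneg_right this hb.le
  have hwen : ‖e₁ * (b:ℂ) + w‖ ≤ M * b := by
    calc ‖e₁ * (b:ℂ) + w‖ ≤ ‖e₁ * (b:ℂ)‖ + ‖w‖ := norm_add_le _ _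
      _ ≤ ‖e₁‖ * b + K * b ^ q := by
          rw [norm_mul, Complex.norm_real, Real.norm_eq_abs, abs_of_pos hb]
          linarith
      _ ≤ ‖e₁‖ * b + K * b := by nlinarith
      _ = M * b := by rw [hM_def]; ring
  have hone : 1 - lam b = A + (e₁ * (b:ℂ) + w) := by rw [hw_def]; ring
  have hlow : a / 2 * b ^ β ≤ ‖1 - lam b‖ := by
    have h1 : ‖A‖ ≤ ‖1 - lam b‖ + ‖e₁ * (b:ℂ) + w‖ := by
      calc ‖A‖ = ‖(1 - lam b) + -(e₁ * (b:ℂ) + w)‖ := by rw [hone]; ring_nf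
        _ ≤ ‖1 - lam b‖ + ‖-(e₁ * (b:ℂ) + w)‖ := norm_add_le _ _
        _ = ‖1 - lam b‖ + ‖e₁ * (b:ℂ) + w‖ := by rw [norm_neg]
    rw [hAn] at h1
    have := hwen.trans hMb
    linarith
  have h1l0 : 1 - lam b ≠ 0 := by
    intro h; rw [h, norm_zero] at hlow; exact absurd hlow (not_le.mpr (by positivity))
  have hne : lam b ≠ 1 := by
    intro h; apply h1l0; rw [h]; ring
  refine ⟨hne, ?_⟩
  set B : ℂ := A + e₁ * (b:ℂ) with hB_def
  have hBlow : a / 2 * b ^ β ≤ ‖B‖ := by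
    have h1 : ‖A‖ ≤ ‖B‖ + ‖e₁ * (b:ℂ)‖ := by
      calc ‖A‖ = ‖B + -(e₁ * (b:ℂ))‖ := by rw [hB_def]; ring_nf
        _ ≤ ‖B‖ + ‖-(e₁ * (b:ℂ))‖ := norm_add_le _ _
        _ = ‖B‖ + ‖e₁ * (b:ℂ)‖ := by rw [norm_neg]
    rw [hAn] at h1
    have := he₁b.trans hMb
    linarith
  have hB0 : B ≠ 0 := by
    intro h; rw [h, norm_zero] at hBlow; exact absurd hBlow (not_le.mpr (by positivity))
  set x : ℂ := -(e₁ * (b:ℂ)) / A with hx_def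
  have hxn : ‖x‖ ≤ (M / a) * b ^ (1 - β) := by
    rw [hx_def, norm_div, norm_neg, hAn]
    rw [div_le_iff₀ (by positivity)]
    calc ‖e₁ * (b:ℂ)‖ ≤ M * b := he₁b
      _ = M / a * b ^ (1 - β) * (a * b ^ β) := by
          field_simp
          rw [hsplit]
  have hxhalf : ‖x‖ ≤ 1 / 2 := by
    calc ‖x‖ ≤ (M / a) * b ^ (1 - β) := hxn
      _ ≤ (M / a) * (a / (2 * M)) := mul_le_mul_of_nonneg_left h1β (by positivity)
      _ = 1 / 2 := by field_simp
  have hx1 : x ≠ 1 := by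
    intro h; rw [h, norm_one] at hxhalf; linarith
  clear_value A w B x
  -- term identity
  have hbβpow : ∀ j : ℕ, ((b ^ β : ℝ) : ℂ) ^ (j + 1) = ((b ^ (β * ((j:ℝ) + 1)) : ℝ) : ℂ) := by
    intro j
    rw [← Complex.ofReal_pow, ← Real.rpow_natCast (b ^ β) (j + 1), ← Real.rpow_mul hb.le]
    push_cast; ring_nf
  have hterm : ∀ j : ℕ, ((-1:ℂ)^j * e₁^j / ((c:ℂ) * cβ)^(j+1)) *
      ((b ^ (-(((j:ℝ) + 1) * β - (j:ℝ))) : ℝ) : ℂ) = A⁻¹ * x ^ j := by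
    intro j
    have hre : (b ^ (-(((j:ℝ) + 1) * β - (j:ℝ))) : ℝ)
        = b ^ (j:ℕ) * (b ^ (β * ((j:ℝ) + 1)))⁻¹ := by
      rw [← Real.rpow_natCast b j, ← Real.rpow_neg hb.le, ← Real.rpow_add hb]
      ring_nf
    rw [hre, hx_def, div_pow, neg_pow, hA_def]
    have hb0 : ((b ^ (β * ((j:ℝ) + 1)) : ℝ) : ℂ) ≠ 0 := by
      simp only [ne_eq, Complex.ofReal_eq_zero]
      exact (Real.rpow_pos_of_pos hb _).ne'
    have hbb : ((b ^ β : ℝ) : ℂ) ≠ 0 := by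
      simp only [ne_eq, Complex.ofReal_eq_zero]; exact hbβ.ne'
    have key : (((c:ℂ) * cβ) * ((b ^ β : ℝ) : ℂ)) ^ (j + 1)
        = ((c:ℂ) * cβ) ^ (j + 1) * ((b ^ (β * ((j:ℝ) + 1)) : ℝ) : ℂ) := by
      rw [mul_pow, hbβpow]
    have hc0 : (c:ℂ) ≠ 0 := Complex.ofReal_ne_zero.mpr hc.ne'
    push_cast
    rw [← hbβpow]
    field_simp
    ring
  have hgeom : ∑ j ∈ Finset.range (J + 1), ((-1:ℂ)^j * e₁^j / ((c:ℂ) * cβ)^(j+1)) *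
      ((b ^ (-(((j:ℝ) + 1) * β - (j:ℝ))) : ℝ) : ℂ) = B⁻¹ - B⁻¹ * x ^ (J + 1) := by
    rw [Finset.sum_congr rfl fun j _ => hterm j, ← Finset.mul_sum, geom_sum_eq hx1]
    have hxm1 : x - 1 = -B / A := by
      rw [hx_def, hB_def]; field_simp; ring
    rw [hxm1]
    field_simp
    ring
  rw [hgeom]
  have hdecomp : (1 - lam b)⁻¹ - (B⁻¹ - B⁻¹ * x ^ (J + 1))
      = ((1 - lam b)⁻¹ - B⁻¹) + B⁻¹ * x ^ (J + 1) := by ring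
  rw [hdecomp]
  have hfirst : ‖(1 - lam b)⁻¹ - B⁻¹‖ ≤ 4 * K / a ^ 2 * b ^ (q - 2*β) := by
    rw [inv_sub_inv h1l0 hB0]
    have hnum : B - (1 - lam b) = -w := by rw [hB_def, hone]; ring
    rw [hnum, norm_div, norm_neg, norm_mul]
    have hden : (a / 2 * b ^ β) * (a / 2 * b ^ β) ≤ ‖1 - lam b‖ * ‖B‖ :=
      mul_le_mul hlow hBlow (by positivity) (norm_nonneg _)
    have hdenpos : (0:ℝ) < (a / 2 * b ^ β) * (a / 2 * b ^ β) := by positivity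
    calc ‖w‖ / (‖1 - lam b‖ * ‖B‖) ≤ (K * b ^ q) / ((a / 2 * b ^ β) * (a / 2 * b ^ β)) := by
          apply div_le_div₀ (by positivity) hw hdenpos hden
      _ = 4 * K / a ^ 2 * b ^ (q - 2*β) := by
          rw [Real.rpow_sub hb]
          have : b ^ (2*β) = b ^ β * b ^ β := by
            rw [← Real.rpow_add hb]; ring_nf
          rw [this]
          field_simp
          ring
  have hJ1 : q - 2*β ≤ (1 - β) * ((J:ℝ) + 1) - β := by
    have h := Nat.lt_floor_add_one ((q - β) / (1 - β))
    rw [div_lt_iff₀ (by linarith : (0:ℝ) < 1 - β)] at h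
    rw [← hJdef] at h
    nlinarith
  have hsecond : ‖B⁻¹ * x ^ (J + 1)‖ ≤ (2 / a) * (M / a) ^ (J + 1) * b ^ (q - 2*β) := by
    rw [norm_mul, norm_inv, norm_pow]
    have hB' : (0:ℝ) < ‖B‖ := lt_of_lt_of_le (by positivity) hBlow
    have h1 : ‖B‖⁻¹ ≤ (a / 2 * b ^ β)⁻¹ :=
      inv_anti₀ (by positivity) hBlow
    have h2 : ‖x‖ ^ (J + 1) ≤ ((M / a) * b ^ (1 - β)) ^ (J + 1) :=
      pow_le_pow_left₀ (norm_nonneg _) hxn _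
    calc ‖B‖⁻¹ * ‖x‖ ^ (J + 1) ≤ (a / 2 * b ^ β)⁻¹ * ((M / a) * b ^ (1 - β)) ^ (J + 1) := by
          apply mul_le_mul h1 h2 (by positivity) (by positivity)
      _ = (2 / a) * (M / a) ^ (J + 1) * b ^ ((1 - β) * ((J:ℝ) + 1) - β) := by
          rw [mul_pow, ← Real.rpow_natCast (b ^ (1 - β)) (J + 1), ← Real.rpow_mul hb.le,
            Real.rpow_sub hb]
          push_cast
          field_simp
      _ ≤ (2 / a) * (M / a) ^ (J + 1) * b ^ (q - 2*β) := by
          apply mul_le_mul_of_nonneg_left _ (by positivity)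
          exact Real.rpow_le_rpow_of_exponent_ge hb hb1 hJ1
  have hexp : b ^ (-(2*β - q)) = b ^ (q - 2*β) := by ring_nf
  rw [hexp]
  calc ‖((1 - lam b)⁻¹ - B⁻¹) + B⁻¹ * x ^ (J + 1)‖
      ≤ ‖(1 - lam b)⁻¹ - B⁻¹‖ + ‖B⁻¹ * x ^ (J + 1)‖ := norm_add_le _ _
    _ ≤ 4 * K / a ^ 2 * b ^ (q - 2*β) + (2 / a) * (M / a) ^ (J + 1) * b ^ (q - 2*β) :=
        add_le_add hfirst hsecond
    _ = (4 * K / a ^ 2 + (2 / a) * (M / a) ^ (J + 1)) * b ^ (q - 2*β) := by ring
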